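/- For a feasible initial state s₁ (i.e., min_π V_c^π(s₁) = 0), the Lagrangian dual value min_{y ≥ 0} max_{π} (V_r^π(s₁) − y·V_c^π(s₁)) equals the constrained optimum max{V_r^π(s₁) : V_c^π(s₁) = 0} (strong duality for the zero-violation CMDP), without assuming Slater's condition. -/
import Mathlib


open Finset

/-- Expected sum of the per-step functions `f` (indexed by the number of remaining
steps) along trajectories generated by policy `π` under dynamics `P`. -/
noncomputable def EV {S A : Type*} [Fintype S] [Fintype A]
    (P : S → A → S → ℝ) (π : ℕ → S → A → ℝ) (f : ℕ → S → A → ℝ) :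
    ℕ → S → ℝ
  | 0, _ => 0
  | n + 1, s =>
      ∑ a, π (n + 1) s a * (f (n + 1) s a + ∑ s', P s a s' * EV P π f n s')

/-- State-action value (cost-to-go) of a policy, with `n` remaining steps. -/
noncomputable def Qval {S A : Type*} [Fintype S] [Fintype A]
    (P : S → A → S → ℝ) (c : ℕ → S → A → ℝ) (π : ℕ → S → A → ℝ) :
    ℕ → S → A → ℝ
  | 0, _, _ => 0
  | n + 1, s, a => c (n + 1) s a + ∑ s', P s a s' * EV P π c n s'

/-- `P` is a stochastic transition kernel. -/
def StochMat {S A : Type*} [Fintype S] (P : S → A → S → ℝ) : Prop :=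
  ∀ s a, (∀ s', 0 ≤ P s a s') ∧ ∑ s', P s a s' = 1

/-- `π` is a (Markovian, possibly time-dependent) stochastic policy. -/
def StochPol {S A : Type*} [Fintype A] (π : ℕ → S → A → ℝ) : Prop :=
  ∀ n s, (∀ a, 0 ≤ π n s a) ∧ ∑ a, π n s a = 1

set_option linter.unusedSectionVars false

section Aux
variable {S A : Type*} [Fintype S] [Fintype A]

lemma EV_sub_smul (P : S → A → S → ℝ) (π : ℕ → S → A → ℝ) (r c : ℕ → S → A → ℝ)
    (y : ℝ) : ∀ n s, EV P π (fun n s a => r n s a - y * c n s a) n s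
      = EV P π r n s - y * EV P π c n s := by
  intro n
  induction n with
  | zero => intro s; simp [EV]
  | succ n ih =>
    intro s
    simp only [EV]
    rw [Finset.mul_sum, ← Finset.sum_sub_distrib]
    refine Finset.sum_congr rfl fun a _ => ?_
    have h2 : ∑ s', P s a s' * (y * EV P π c n s') = y * ∑ s', P s a s' * EV P π c n s' := by
      rw [Finset.mul_sum]; exact Finset.sum_congr rfl fun _ _ => by ring
    simp only [ih, mul_sub, Finset.sum_sub_distrib, h2]
    ring

lemma EV_nonneg (P : S → A → S → ℝ) (π : ℕ → S → A → ℝ) (f : ℕ → S → A → ℝ)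
    (hP : StochMat P) (hπ : StochPol π) (hf : ∀ n s a, 0 ≤ f n s a) :
    ∀ n s, 0 ≤ EV P π f n s := by
  intro n
  induction n with
  | zero => intro s; simp [EV]
  | succ n ih =>
    intro s
    refine Finset.sum_nonneg fun a _ => mul_nonneg ((hπ _ _).1 a) ?_
    exact add_nonneg (hf _ _ _) (Finset.sum_nonneg fun s' _ =>
      mul_nonneg ((hP s a).1 s') (ih s'))

lemma EV_le (P : S → A → S → ℝ) (π : ℕ → S → A → ℝ) (f : ℕ → S → A → ℝ)
    (hP : StochMat P) (hπ : StochPol π) (hf : ∀ n s a, f n s a ≤ 1) :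
    ∀ n s, EV P π f n s ≤ n := by
  intro n
  induction n with
  | zero => intro s; simp [EV]
  | succ n ih =>
    intro s
    have : ∀ a ∈ Finset.univ (α := A), π (n+1) s a * (f (n + 1) s a + ∑ s', P s a s' * EV P π f n s')
        ≤ π (n+1) s a * (1 + n) := by
      intro a _
      refine mul_le_mul_of_nonneg_left ?_ ((hπ _ _).1 a)
      refine add_le_add (hf _ _ _) ?_
      calc ∑ s', P s a s' * EV P π f n s' ≤ ∑ s', P s a s' * n :=
            Finset.sum_le_sum fun s' _ => mul_le_mul_of_nonneg_left (ih s') ((hP s a).1 s')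
        _ = n := by rw [← Finset.sum_mul, (hP s a).2, one_mul]
    calc EV P π f (n+1) s ≤ ∑ a, π (n+1) s a * (1 + n) := Finset.sum_le_sum this
      _ = 1 + n := by rw [← Finset.sum_mul, (hπ _ _).2, one_mul]
      _ = ((n+1 : ℕ) : ℝ) := by push_cast; ring

open scoped Classical in
noncomputable def ind (d : ℕ → S → A) : ℕ → S → A → ℝ :=
  fun n s a => if a = d n s then 1 else 0

lemma ind_stoch [Nonempty A] (d : ℕ → S → A) : StochPol (ind d) := by
  intro n s
  constructor
  · intro a
    unfold ind
    split <;> norm_num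
  · classical
    simp [ind]

open scoped Classical in
lemma sum_ind (d : ℕ → S → A) (n : ℕ) (s : S) (t : A → ℝ) :
    ∑ a, ind d n s a * t a = t (d n s) := by
  simp [ind, ite_mul]

lemma EV_ind (P : S → A → S → ℝ) (f : ℕ → S → A → ℝ) (d : ℕ → S → A) (n : ℕ) (s : S) :
    EV P (ind d) f (n+1) s
      = f (n+1) s (d (n+1) s) + ∑ s', P s (d (n+1) s) s' * EV P (ind d) f n s' := by
  rw [show EV P (ind d) f (n+1) s = ∑ a, ind d (n+1) s a *
    (f (n + 1) s a + ∑ s', P s a s' * EV P (ind d) f n s') from rfl, sum_ind]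

variable [Nonempty A]

noncomputable def U (P : S → A → S → ℝ) (g : ℕ → S → A → ℝ) : ℕ → S → ℝ
  | 0, _ => 0
  | n + 1, s => Finset.univ.sup' Finset.univ_nonempty
      (fun a => g (n+1) s a + ∑ s', P s a s' * U P g n s')

lemma EV_le_U (P : S → A → S → ℝ) (g : ℕ → S → A → ℝ) (π : ℕ → S → A → ℝ)
    (hP : StochMat P) (hπ : StochPol π) : ∀ n s, EV P π g n s ≤ U P g n s := by
  intro n
  induction n with
  | zero => intro s; simp [EV, U]
  | succ n ih =>
    intro s
    calc EV P π g (n+1) s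
        ≤ ∑ a, π (n+1) s a * U P g (n+1) s := by
          refine Finset.sum_le_sum fun a _ => mul_le_mul_of_nonneg_left ?_ ((hπ _ _).1 a)
          refine le_trans (add_le_add le_rfl (Finset.sum_le_sum fun s' _ =>
            mul_le_mul_of_nonneg_left (ih s') ((hP s a).1 s'))) ?_
          exact Finset.le_sup' (fun a => g (n+1) s a + ∑ s', P s a s' * U P g n s')
            (Finset.mem_univ a)
      _ = U P g (n+1) s := by rw [← Finset.sum_mul, (hπ _ _).2, one_mul]

noncomputable def greedy (P : S → A → S → ℝ) (g : ℕ → S → A → ℝ) : ℕ → S → A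
  | 0, _ => Classical.arbitrary A
  | n + 1, s => Classical.choose (Finset.exists_mem_eq_sup' Finset.univ_nonempty
      (fun a => g (n+1) s a + ∑ s', P s a s' * U P g n s'))

lemma EV_ind_greedy (P : S → A → S → ℝ) (g : ℕ → S → A → ℝ) :
    ∀ n s, EV P (ind (greedy P g)) g n s = U P g n s := by
  intro n
  induction n with
  | zero => intro s; simp [EV, U]
  | succ n ih =>
    intro s
    rw [EV_ind]
    have hspec := Classical.choose_spec (Finset.exists_mem_eq_sup' (Finset.univ_nonempty (α := A))
      (fun a => g (n+1) s a + ∑ s', P s a s' * U P g n s'))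
    have : greedy P g (n+1) s = Classical.choose (Finset.exists_mem_eq_sup' Finset.univ_nonempty
      (fun a => g (n+1) s a + ∑ s', P s a s' * U P g n s')) := rfl
    rw [show (U P g (n+1) s) = Finset.univ.sup' Finset.univ_nonempty
      (fun a => g (n+1) s a + ∑ s', P s a s' * U P g n s') from rfl, hspec.2, ← this]
    simp only [ih]

lemma EV_agree (P : S → A → S → ℝ) (f : ℕ → S → A → ℝ) (π π' : ℕ → S → A → ℝ) :
    ∀ n, (∀ m, m ≤ n → π m = π' m) → ∀ s, EV P π f n s = EV P π' f n s := by
  intro n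
  induction n with
  | zero => intro _ s; simp [EV]
  | succ n ih =>
    intro h s
    show (∑ a, π (n + 1) s a * (f (n + 1) s a + ∑ s', P s a s' * EV P π f n s')) = _
    rw [h (n+1) le_rfl]
    exact Finset.sum_congr rfl fun a _ => by
      rw [Finset.sum_congr rfl fun s' _ => by rw [ih (fun m hm => h m (Nat.le_succ_of_le hm)) s']]

lemma range_cost_finite (P : S → A → S → ℝ) (cf : ℕ → S → A → ℝ) (H : ℕ) (s₁ : S) :
    (Set.range (fun d : ℕ → S → A => EV P (ind d) cf H s₁)).Finite := by
  classical
  set G' : (Fin (H+1) → S → A) → ℝ := fun e =>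
    EV P (ind (fun n s => if h : n < H + 1 then e ⟨n, h⟩ s else Classical.arbitrary A)) cf H s₁
    with hG'
  have key : ∀ d : ℕ → S → A,
      EV P (ind d) cf H s₁ = G' (fun m => d m.val) := by
    intro d
    refine EV_agree P cf _ _ H (fun m hm => ?_) s₁
    funext s a
    unfold ind
    simp only [dif_pos (Nat.lt_succ_of_le hm)]
  have hsub : Set.range (fun d : ℕ → S → A => EV P (ind d) cf H s₁) ⊆ Set.range G' := by
    rintro x ⟨d, rfl⟩
    exact ⟨fun m => d m.val, (key d).symm⟩
  exact (Set.finite_range G').subset hsub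

end Aux

theorem strong_duality_zero_violation'
    {S A : Type*} [Fintype S] [Fintype A]
    (P : S → A → S → ℝ) (r c : ℕ → S → A → ℝ) (H : ℕ)
    (hP : StochMat P)
    (hr : ∀ n s a, r n s a ∈ Set.Icc (0 : ℝ) 1)
    (hc : ∀ n s a, 0 ≤ c n s a)
    (s₁ : S)
    (hfeas : ∃ π, StochPol π ∧ EV P π c H s₁ = 0) :
    sInf {v : ℝ | ∃ y : ℝ, 0 ≤ y ∧
        v = sSup {x : ℝ | ∃ π, StochPol π ∧
          x = EV P π r H s₁ - y * EV P π c H s₁}} =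
      sSup {x : ℝ | ∃ π, StochPol π ∧ EV P π c H s₁ = 0 ∧
        x = EV P π r H s₁} := by
  classical
  obtain ⟨π₀, hπ₀, hcπ₀⟩ := hfeas
  haveI hA : Nonempty A := by
    rcases isEmpty_or_nonempty A with h | h
    · exfalso; have := (hπ₀ 1 s₁).2; simp at this
    · exact h
  set Sfeas := {x : ℝ | ∃ π, StochPol π ∧ EV P π c H s₁ = 0 ∧ x = EV P π r H s₁} with hSfeas
  set V := sSup Sfeas with hV
  have hr1 : ∀ n s a, r n s a ≤ 1 := fun n s a => (hr n s a).2
  have hr0 : ∀ n s a, 0 ≤ r n s a := fun n s a => (hr n s a).1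
  have hbddF : BddAbove Sfeas := by
    refine ⟨H, ?_⟩
    rintro x ⟨π, hπ, _, rfl⟩
    exact EV_le P π r hP hπ hr1 H s₁
  have hneF : Sfeas.Nonempty := ⟨EV P π₀ r H s₁, π₀, hπ₀, hcπ₀, rfl⟩
  have hV0 : 0 ≤ V :=
    le_trans (EV_nonneg P π₀ r hP hπ₀ hr0 H s₁)
      (le_csSup hbddF ⟨π₀, hπ₀, hcπ₀, rfl⟩)
  set Dset : ℝ → Set ℝ := fun y =>
    {x : ℝ | ∃ π, StochPol π ∧ x = EV P π r H s₁ - y * EV P π c H s₁} with hDset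
  have hbddD : ∀ y : ℝ, 0 ≤ y → BddAbove (Dset y) := by
    intro y hy
    refine ⟨H, ?_⟩
    rintro x ⟨π, hπ, rfl⟩
    have h1 : EV P π r H s₁ ≤ H := EV_le P π r hP hπ hr1 H s₁
    have h2 : 0 ≤ y * EV P π c H s₁ :=
      mul_nonneg hy (EV_nonneg P π c hP hπ hc H s₁)
    linarith
  have hneD : ∀ y : ℝ, (Dset y).Nonempty := fun y =>
    ⟨EV P π₀ r H s₁ - y * EV P π₀ c H s₁, π₀, hπ₀, rfl⟩
  have hVleD : ∀ y : ℝ, 0 ≤ y → V ≤ sSup (Dset y) := by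
    intro y hy
    refine csSup_le hneF ?_
    rintro x ⟨π, hπ, hc0, rfl⟩
    refine le_csSup (hbddD y hy) ⟨π, hπ, ?_⟩
    rw [hc0, mul_zero, sub_zero]
  -- the gap δ
  have hfin := range_cost_finite P c H s₁
  obtain ⟨δ, hδpos, hδmin⟩ : ∃ δ : ℝ, 0 < δ ∧ ∀ d : ℕ → S → A,
      EV P (ind d) c H s₁ ≠ 0 → δ ≤ EV P (ind d) c H s₁ := by
    by_cases hTp : ∃ d : ℕ → S → A, 0 < EV P (ind d) c H s₁
    · set Tpos := {x ∈ Set.range (fun d : ℕ → S → A => EV P (ind d) c H s₁) | 0 < x}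
        with hTpos
      have hfinp : Tpos.Finite := hfin.subset (Set.sep_subset _ _)
      obtain ⟨d₀, hd₀⟩ := hTp
      have hnep : (hfinp.toFinset).Nonempty := by
        refine ⟨EV P (ind d₀) c H s₁, ?_⟩
        rw [Set.Finite.mem_toFinset]
        exact ⟨⟨d₀, rfl⟩, hd₀⟩
      refine ⟨hfinp.toFinset.min' hnep, ?_, ?_⟩
      · have := hfinp.toFinset.min'_mem hnep
        rw [Set.Finite.mem_toFinset] at this
        exact this.2
      · intro d hd
        have hpos : 0 < EV P (ind d) c H s₁ :=
          lt_of_le_of_ne (EV_nonneg P (ind d) c hP (ind_stoch d) hc H s₁) (Ne.symm hd)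
        refine Finset.min'_le _ _ ?_
        rw [Set.Finite.mem_toFinset]
        exact ⟨⟨d, rfl⟩, hpos⟩
    · refine ⟨1, one_pos, fun d hd => absurd ?_ hd⟩
      push_neg at hTp
      exact le_antisymm (hTp d) (EV_nonneg P (ind d) c hP (ind_stoch d) hc H s₁)
  set y₀ : ℝ := H / δ with hy₀def
  have hy₀ : 0 ≤ y₀ := div_nonneg (Nat.cast_nonneg H) hδpos.le
  set g : ℕ → S → A → ℝ := fun n s a => r n s a - y₀ * c n s a with hg
  set d : ℕ → S → A := greedy P g with hd
  have hDle : sSup (Dset y₀) ≤ V := by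
    refine csSup_le (hneD y₀) ?_
    rintro x ⟨π, hπ, rfl⟩
    have h1 : EV P π r H s₁ - y₀ * EV P π c H s₁ = EV P π g H s₁ :=
      (EV_sub_smul P π r c y₀ H s₁).symm
    have h2 : EV P π g H s₁ ≤ U P g H s₁ := EV_le_U P g π hP hπ H s₁
    have h3 : U P g H s₁ = EV P (ind d) g H s₁ := (EV_ind_greedy P g H s₁).symm
    have h4 : EV P (ind d) g H s₁
        = EV P (ind d) r H s₁ - y₀ * EV P (ind d) c H s₁ :=
      EV_sub_smul P (ind d) r c y₀ H s₁
    by_cases hzero : EV P (ind d) c H s₁ = 0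
    · have : EV P (ind d) r H s₁ ∈ Sfeas := ⟨ind d, ind_stoch d, hzero, rfl⟩
      have := le_csSup hbddF this
      rw [h1]
      calc EV P π g H s₁ ≤ EV P (ind d) g H s₁ := h3 ▸ h2
        _ = EV P (ind d) r H s₁ := by rw [h4, hzero, mul_zero, sub_zero]
        _ ≤ V := this
    · have hdc : δ ≤ EV P (ind d) c H s₁ := hδmin d hzero
      have hH : y₀ * EV P (ind d) c H s₁ ≥ (H : ℝ) := by
        calc (H : ℝ) = y₀ * δ := by
              rw [hy₀def, div_mul_cancel₀]
              exact ne_of_gt hδpos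
          _ ≤ y₀ * EV P (ind d) c H s₁ := mul_le_mul_of_nonneg_left hdc hy₀
      have hrle : EV P (ind d) r H s₁ ≤ H := EV_le P (ind d) r hP (ind_stoch d) hr1 H s₁
      rw [h1]
      calc EV P π g H s₁ ≤ EV P (ind d) g H s₁ := h3 ▸ h2
        _ = EV P (ind d) r H s₁ - y₀ * EV P (ind d) c H s₁ := h4
        _ ≤ 0 := by linarith
        _ ≤ V := hV0
  refine le_antisymm ?_ ?_
  · refine csInf_le_of_le ⟨V, ?_⟩ ⟨y₀, hy₀, rfl⟩ hDle
    rintro v ⟨y, hy, rfl⟩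
    exact hVleD y hy
  · refine le_csInf ⟨sSup (Dset 0), 0, le_rfl, rfl⟩ ?_
    rintro v ⟨y, hy, rfl⟩
    exact hVleD y hy


/-- Strong duality for the zero-violation CMDP at a feasible
initial state `s₁`: `min_{y ≥ 0} max_π (V_r^π(s₁) − y·V_c^π(s₁))` equals
`max {V_r^π(s₁) : V_c^π(s₁) = 0}`, without Slater's condition. -/
theorem strong_duality_zero_violation
    {S A : Type*} [Fintype S] [Fintype A]
    (P : S → A → S → ℝ) (r c : ℕ → S → A → ℝ) (H : ℕ)
    (hP : StochMat P)
    (hr : ∀ n s a, r n s a ∈ Set.Icc (0 : ℝ) 1)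
    (hc : ∀ n s a, 0 ≤ c n s a)
    (s₁ : S)
    (hfeas : ∃ π, StochPol π ∧ EV P π c H s₁ = 0) :
    sInf {v : ℝ | ∃ y : ℝ, 0 ≤ y ∧
        v = sSup {x : ℝ | ∃ π, StochPol π ∧
          x = EV P π r H s₁ - y * EV P π c H s₁}} =
      sSup {x : ℝ | ∃ π, StochPol π ∧ EV P π c H s₁ = 0 ∧
        x = EV P π r H s₁} := by
  exact strong_duality_zero_violation' P r c H hP hr hc s₁ hfeas
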